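/- Let n·w ~ Multinomial(n, p) with p in the probability simplex. Then E[w_i log w_i] ≤ p_i log(p_i + (1−p_i)/n) for each i, and consequently E[Σ_i w_i log(w_i/p_i)] ≤ Σ_i p_i log(p_i + (1−p_i)/n) − Σ_i p_i log p_i, with the convention 0 log 0 = 0. -/

import Mathlib

open scoped BigOperators
open Finset

private lemma binom_total (m : ℕ) (a b : ℝ) :
    ∑ k ∈ Finset.range (m + 1), (m.choose k : ℝ) * a ^ k * b ^ (m - k) = (a + b) ^ m := by
  rw [add_pow]
  exact Finset.sum_congr rfl fun k _ => by ring

private lemma choose_cast (m j : ℕ) :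
    ((m + 1).choose (j + 1) : ℝ) * ((j : ℝ) + 1) = ((m : ℝ) + 1) * (m.choose j : ℝ) := by
  have h := (Nat.add_one_mul_choose_eq m j).symm
  have h2 : (((m + 1).choose (j + 1) * (j + 1) : ℕ) : ℝ) = (((m + 1) * m.choose j : ℕ) : ℝ) := by
    exact_mod_cast congrArg (Nat.cast (R := ℝ)) h
  push_cast at h2
  linarith [h2]

private lemma binom_mean (m : ℕ) (a b : ℝ) :
    ∑ k ∈ Finset.range (m + 1), (k : ℝ) * (m.choose k : ℝ) * a ^ k * b ^ (m - k)
      = m * a * (a + b) ^ (m - 1) := by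
  cases m with
  | zero => simp
  | succ M =>
    rw [Finset.sum_range_succ']
    simp only [Nat.cast_zero, zero_mul, add_zero]
    have key : ∀ j ∈ Finset.range (M + 1),
        ((j + 1 : ℕ) : ℝ) * ((M + 1).choose (j + 1) : ℝ) * a ^ (j + 1) * b ^ (M + 1 - (j + 1))
          = ((M : ℝ) + 1) * a * ((M.choose j : ℝ) * a ^ j * b ^ (M - j)) := by
      intro j _
      have hj : M + 1 - (j + 1) = M - j := by omega
      rw [hj]
      have hc := choose_cast M j
      push_cast
      calc ((j : ℝ) + 1) * ((M + 1).choose (j + 1) : ℝ) * a ^ (j + 1) * b ^ (M - j)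
          = (((M + 1).choose (j + 1) : ℝ) * ((j : ℝ) + 1)) * a ^ (j + 1) * b ^ (M - j) := by ring
        _ = (((M : ℝ) + 1) * (M.choose j : ℝ)) * a ^ (j + 1) * b ^ (M - j) := by rw [hc]
        _ = ((M : ℝ) + 1) * a * ((M.choose j : ℝ) * a ^ j * b ^ (M - j)) := by ring
    rw [Finset.sum_congr rfl key, ← Finset.mul_sum, binom_total]
    push_cast
    simp

private lemma key_bound (m : ℕ) (q : ℝ) (hq0 : 0 < q) (hq1 : q ≤ 1) :
    ∑ k ∈ Finset.range (m + 1 + 1),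
        ((m + 1).choose k : ℝ) * q ^ k * (1 - q) ^ (m + 1 - k)
          * (((k : ℝ) / (m + 1 : ℕ)) * Real.log ((k : ℝ) / (m + 1 : ℕ))) ≤
      q * Real.log (q + (1 - q) / (m + 1 : ℕ)) := by
  have hb0 : (0 : ℝ) ≤ 1 - q := by linarith
  have hnr : ((m + 1 : ℕ) : ℝ) = (m : ℝ) + 1 := by push_cast; ring
  have hnpos : (0 : ℝ) < (m : ℝ) + 1 := by positivity
  have hne : ((m : ℝ) + 1) ≠ 0 := ne_of_gt hnpos
  set w : ℕ → ℝ := fun j => (m.choose j : ℝ) * q ^ j * (1 - q) ^ (m - j) with hw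
  have hwnn : ∀ j ∈ Finset.range (m + 1), 0 ≤ w j := fun j _ =>
    mul_nonneg (mul_nonneg (by positivity) (by positivity)) (pow_nonneg hb0 _)
  have hwsum : ∑ j ∈ Finset.range (m + 1), w j = 1 := by
    rw [hw]
    have := binom_total m q (1 - q)
    simpa using this
  have hone : q + (1 - q) = 1 := by ring
  have hmean : ∑ j ∈ Finset.range (m + 1), (j : ℝ) * w j = m * q := by
    have h := binom_mean m q (1 - q)
    rw [hone, one_pow, mul_one] at h
    rw [← h]
    exact Finset.sum_congr rfl fun j _ => by rw [hw]; ring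
  -- rewrite LHS
  have hstep : ∑ k ∈ Finset.range (m + 1 + 1),
      ((m + 1).choose k : ℝ) * q ^ k * (1 - q) ^ (m + 1 - k)
        * (((k : ℝ) / (m + 1 : ℕ)) * Real.log ((k : ℝ) / (m + 1 : ℕ)))
      = q * ∑ j ∈ Finset.range (m + 1), w j * Real.log (((j : ℝ) + 1) / ((m : ℝ) + 1)) := by
    rw [Finset.sum_range_succ']
    simp only [Nat.cast_zero, zero_div, Real.log_zero, mul_zero, zero_mul, add_zero]
    rw [Finset.mul_sum]
    refine Finset.sum_congr rfl fun j _ => ?_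
    have hj : m + 1 - (j + 1) = m - j := by omega
    rw [hj, hnr]
    have hc := choose_cast m j
    push_cast
    set L := Real.log (((j : ℝ) + 1) / ((m : ℝ) + 1)) with hL
    calc ((m + 1).choose (j + 1) : ℝ) * q ^ (j + 1) * (1 - q) ^ (m - j)
          * (((j : ℝ) + 1) / ((m : ℝ) + 1) * L)
        = (((m + 1).choose (j + 1) : ℝ) * ((j : ℝ) + 1))
            * (q ^ (j + 1) * (1 - q) ^ (m - j) * L * ((m : ℝ) + 1)⁻¹) := by
          rw [div_eq_mul_inv]; ring
      _ = (((m : ℝ) + 1) * (m.choose j : ℝ))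
            * (q ^ (j + 1) * (1 - q) ^ (m - j) * L * ((m : ℝ) + 1)⁻¹) := by rw [hc]
      _ = (((m : ℝ) + 1) * ((m : ℝ) + 1)⁻¹)
            * ((m.choose j : ℝ) * q ^ (j + 1) * (1 - q) ^ (m - j) * L) := by ring
      _ = q * (w j * L) := by rw [mul_inv_cancel₀ hne, hw]; ring
  rw [hstep]
  -- Jensen
  have hmem : ∀ j ∈ Finset.range (m + 1), ((j : ℝ) + 1) / ((m : ℝ) + 1) ∈ Set.Ioi (0 : ℝ) :=
    fun j _ => by simp only [Set.mem_Ioi]; positivity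
  have jensen := (strictConcaveOn_log_Ioi.concaveOn).le_map_sum hwnn hwsum hmem
  simp only [smul_eq_mul] at jensen
  have hx : ∑ j ∈ Finset.range (m + 1), w j * (((j : ℝ) + 1) / ((m : ℝ) + 1))
      = q + (1 - q) / ((m : ℝ) + 1) := by
    have hterm : ∀ j ∈ Finset.range (m + 1), w j * (((j : ℝ) + 1) / ((m : ℝ) + 1))
        = ((j : ℝ) * w j) * ((m : ℝ) + 1)⁻¹ + w j * ((m : ℝ) + 1)⁻¹ := fun j _ => by
      rw [div_eq_mul_inv]; ring
    rw [Finset.sum_congr rfl hterm, Finset.sum_add_distrib, ← Finset.sum_mul, ← Finset.sum_mul,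
      hmean, hwsum]
    field_simp
    ring
  rw [hx] at jensen
  rw [hnr]
  exact mul_le_mul_of_nonneg_left jensen hq0.le

theorem multinomial_expected_entropy_bound (n : ℕ) (hn : 1 ≤ n) (p : Fin n → ℝ)
    (hp : ∀ i, 0 < p i) (hsum : ∑ i, p i = 1) :
    (∀ i, ∑ k ∈ Finset.range (n + 1),
        (n.choose k : ℝ) * p i ^ k * (1 - p i) ^ (n - k)
          * (((k : ℝ) / n) * Real.log ((k : ℝ) / n)) ≤
      p i * Real.log (p i + (1 - p i) / n)) ∧
    ∑ i, ∑ k ∈ Finset.range (n + 1),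
        (n.choose k : ℝ) * p i ^ k * (1 - p i) ^ (n - k)
          * (((k : ℝ) / n) * Real.log (((k : ℝ) / n) / p i)) ≤
      ∑ i, p i * Real.log (p i + (1 - p i) / n) - ∑ i, p i * Real.log (p i) := by
  obtain ⟨m, rfl⟩ : ∃ m, n = m + 1 := ⟨n - 1, by omega⟩
  have hple : ∀ i, p i ≤ 1 := by
    intro i
    rw [← hsum]
    exact Finset.single_le_sum (fun j _ => (hp j).le) (Finset.mem_univ i)
  have part1 : ∀ i, ∑ k ∈ Finset.range (m + 1 + 1),
      ((m + 1).choose k : ℝ) * p i ^ k * (1 - p i) ^ (m + 1 - k)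
        * (((k : ℝ) / (m + 1 : ℕ)) * Real.log ((k : ℝ) / (m + 1 : ℕ))) ≤
      p i * Real.log (p i + (1 - p i) / (m + 1 : ℕ)) :=
    fun i => key_bound m (p i) (hp i) (hple i)
  refine ⟨part1, ?_⟩
  have hnr : ((m + 1 : ℕ) : ℝ) = (m : ℝ) + 1 := by push_cast; ring
  have hnpos : (0 : ℝ) < (m : ℝ) + 1 := by positivity
  -- rewrite each inner sum of part 2
  have hinner : ∀ i, ∑ k ∈ Finset.range (m + 1 + 1),
      ((m + 1).choose k : ℝ) * p i ^ k * (1 - p i) ^ (m + 1 - k)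
        * (((k : ℝ) / (m + 1 : ℕ)) * Real.log (((k : ℝ) / (m + 1 : ℕ)) / p i))
      = (∑ k ∈ Finset.range (m + 1 + 1),
          ((m + 1).choose k : ℝ) * p i ^ k * (1 - p i) ^ (m + 1 - k)
            * (((k : ℝ) / (m + 1 : ℕ)) * Real.log ((k : ℝ) / (m + 1 : ℕ))))
        - p i * Real.log (p i) := by
    intro i
    have hone : p i + (1 - p i) = 1 := by ring
    have hmean : ∑ k ∈ Finset.range (m + 1 + 1),
        ((m + 1).choose k : ℝ) * p i ^ k * (1 - p i) ^ (m + 1 - k) * ((k : ℝ) / (m + 1 : ℕ))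
        = p i := by
      have h := binom_mean (m + 1) (p i) (1 - p i)
      rw [hone, one_pow, mul_one] at h
      have : ∑ k ∈ Finset.range (m + 1 + 1),
          ((m + 1).choose k : ℝ) * p i ^ k * (1 - p i) ^ (m + 1 - k) * ((k : ℝ) / (m + 1 : ℕ))
          = (∑ k ∈ Finset.range (m + 1 + 1),
              (k : ℝ) * ((m + 1).choose k : ℝ) * p i ^ k * (1 - p i) ^ (m + 1 - k))
            / ((m + 1 : ℕ) : ℝ) := by
        rw [Finset.sum_div]
        exact Finset.sum_congr rfl fun k _ => by rw [div_eq_mul_inv, div_eq_mul_inv]; ring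
      rw [this, h, hnr]
      field_simp
    have hsplit : ∀ k ∈ Finset.range (m + 1 + 1),
        ((m + 1).choose k : ℝ) * p i ^ k * (1 - p i) ^ (m + 1 - k)
          * (((k : ℝ) / (m + 1 : ℕ)) * Real.log (((k : ℝ) / (m + 1 : ℕ)) / p i))
        = ((m + 1).choose k : ℝ) * p i ^ k * (1 - p i) ^ (m + 1 - k)
            * (((k : ℝ) / (m + 1 : ℕ)) * Real.log ((k : ℝ) / (m + 1 : ℕ)))
          - Real.log (p i) * (((m + 1).choose k : ℝ) * p i ^ k * (1 - p i) ^ (m + 1 - k)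
              * ((k : ℝ) / (m + 1 : ℕ))) := by
      intro k _
      rcases Nat.eq_zero_or_pos k with hk | hk
      · subst hk; simp
      · have hkpos : (0 : ℝ) < (k : ℝ) / ((m + 1 : ℕ) : ℝ) := by
          rw [hnr]
          have : (0 : ℝ) < (k : ℝ) := by exact_mod_cast hk
          positivity
        rw [Real.log_div (ne_of_gt hkpos) (ne_of_gt (hp i))]
        ring
    rw [Finset.sum_congr rfl hsplit, Finset.sum_sub_distrib, ← Finset.mul_sum, hmean]
    ring
  calc ∑ i, ∑ k ∈ Finset.range (m + 1 + 1),
        ((m + 1).choose k : ℝ) * p i ^ k * (1 - p i) ^ (m + 1 - k)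
          * (((k : ℝ) / (m + 1 : ℕ)) * Real.log (((k : ℝ) / (m + 1 : ℕ)) / p i))
      = ∑ i, ((∑ k ∈ Finset.range (m + 1 + 1),
          ((m + 1).choose k : ℝ) * p i ^ k * (1 - p i) ^ (m + 1 - k)
            * (((k : ℝ) / (m + 1 : ℕ)) * Real.log ((k : ℝ) / (m + 1 : ℕ))))
          - p i * Real.log (p i)) := Finset.sum_congr rfl fun i _ => hinner i
    _ = (∑ i, ∑ k ∈ Finset.range (m + 1 + 1),
          ((m + 1).choose k : ℝ) * p i ^ k * (1 - p i) ^ (m + 1 - k)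
            * (((k : ℝ) / (m + 1 : ℕ)) * Real.log ((k : ℝ) / (m + 1 : ℕ))))
          - ∑ i, p i * Real.log (p i) := Finset.sum_sub_distrib _ _
    _ ≤ (∑ i, p i * Real.log (p i + (1 - p i) / (m + 1 : ℕ))) - ∑ i, p i * Real.log (p i) := by
        exact sub_le_sub_right (Finset.sum_le_sum fun i _ => part1 i) _
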